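/- arXiv:2605.23734 — 3 statements merged into one kernel-verified Lean document; each statement's English description precedes it below -/
import Mathlib

section
/- Let t ↦ A(t) and t ↦ B(t) be norm-continuous maps from ℝ to the bounded operators on a Hilbert space H with A(0) = B(0) = 0. Set Λ_A(t) = exp(A(t)) and Λ_B(t) = exp(B(t)). Then there exist constants C > 0 and r > 0 such that ‖A(t) − B(t)‖ ≤ C ‖Λ_A(t) − Λ_B(t)‖ for all |t| ≤ r. -/
open NormedSpace

lemma pow_sub_pow_norm_le' {𝔸 : Type*} [NormedRing 𝔸] [NormOneClass 𝔸] (x y : 𝔸) {M : ℝ}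
    (hx : ‖x‖ ≤ M) (hy : ‖y‖ ≤ M) (n : ℕ) :
    ‖x ^ n - y ^ n‖ ≤ n * M ^ (n - 1) * ‖x - y‖ := by
  have hM : 0 ≤ M := le_trans (norm_nonneg x) hx
  induction n with
  | zero => simp
  | succ n ih =>
    have key : x ^ (n+1) - y ^ (n+1) = x * (x ^ n - y ^ n) + (x - y) * y ^ n := by
      rw [pow_succ', pow_succ']
      noncomm_ring
    have hyn : ‖y ^ n‖ ≤ M ^ n := (norm_pow_le _ _).trans (pow_le_pow_left₀ (norm_nonneg y) hy n)
    have h1 : M * (n * M ^ (n - 1)) ≤ n * M ^ n := by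
      cases n with
      | zero => simp
      | succ m =>
        simp only [Nat.add_sub_cancel]
        rw [pow_succ]
        exact le_of_eq (by push_cast; ring)
    rw [key]
    calc ‖x * (x ^ n - y ^ n) + (x - y) * y ^ n‖
        ≤ ‖x * (x ^ n - y ^ n)‖ + ‖(x - y) * y ^ n‖ := norm_add_le _ _
      _ ≤ ‖x‖ * ‖x ^ n - y ^ n‖ + ‖x - y‖ * ‖y ^ n‖ := by
          gcongr <;> exact norm_mul_le _ _
      _ ≤ M * (n * M ^ (n - 1) * ‖x - y‖) + ‖x - y‖ * M ^ n := by gcongr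
      _ = (M * (n * M ^ (n - 1))) * ‖x - y‖ + M ^ n * ‖x - y‖ := by ring
      _ ≤ (n * M ^ n) * ‖x - y‖ + M ^ n * ‖x - y‖ := by gcongr
      _ = (↑(n + 1) : ℝ) * M ^ ((n + 1) - 1) * ‖x - y‖ := by
          simp only [Nat.add_sub_cancel]; push_cast; ring

lemma exp_sub_exp_sub_le {𝔸 : Type*} [NormedRing 𝔸] [NormOneClass 𝔸] [NormedAlgebra ℂ 𝔸]
    [CompleteSpace 𝔸] (x y : 𝔸) {M : ℝ}
    (hx : ‖x‖ ≤ M) (hy : ‖y‖ ≤ M) :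
    ‖exp x - exp y - (x - y)‖ ≤ (Real.exp M - 1) * ‖x - y‖ := by
  have hM : 0 ≤ M := le_trans (norm_nonneg x) hx
  set f : ℕ → 𝔸 := fun n => ((Nat.factorial n : ℂ))⁻¹ • (x ^ n - y ^ n) with hf
  have hsum : Summable f := by
    have := (expSeries_summable' (𝕂 := ℂ) x).sub (expSeries_summable' (𝕂 := ℂ) y)
    simpa [hf, smul_sub] using this
  have htsum : exp x - exp y = ∑' n, f n := by
    simp only [exp_eq_tsum ℂ]
    rw [← Summable.tsum_sub (expSeries_summable' (𝕂 := ℂ) x) (expSeries_summable' (𝕂 := ℂ) y)]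
    simp [hf, smul_sub]
  have hsplit : ∑' n, f n = f 0 + (f 1 + ∑' n, f (n + 2)) := by
    rw [Summable.tsum_eq_zero_add hsum, Summable.tsum_eq_zero_add (by exact (summable_nat_add_iff 1).2 hsum)]
  have hf0 : f 0 = 0 := by simp [hf]
  have hf1 : f 1 = x - y := by simp [hf]
  have hrest : exp x - exp y - (x - y) = ∑' n, f (n + 2) := by
    rw [htsum, hsplit, hf0, hf1]; abel
  rw [hrest]
  have hbound : ∀ n : ℕ, ‖f (n + 2)‖ ≤ (M ^ (n + 1) / (Nat.factorial (n + 1) : ℝ)) * ‖x - y‖ := by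
    intro n
    have h1 : ‖f (n + 2)‖ = ((Nat.factorial (n+2) : ℝ))⁻¹ * ‖x ^ (n+2) - y ^ (n+2)‖ := by
      rw [hf]
      simp [norm_smul, Complex.norm_natCast]
    rw [h1]
    have h2 := pow_sub_pow_norm_le' x y hx hy (n + 2)
    calc ((Nat.factorial (n+2) : ℝ))⁻¹ * ‖x ^ (n+2) - y ^ (n+2)‖
        ≤ ((Nat.factorial (n+2) : ℝ))⁻¹ * ((n+2) * M ^ (n+1) * ‖x - y‖) := by
          gcongr
          simpa using h2
      _ = (M ^ (n + 1) / (Nat.factorial (n + 1) : ℝ)) * ‖x - y‖ := by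
          rw [Nat.factorial_succ (n+1)]
          push_cast
          field_simp
          ring
  have hsummaj : Summable (fun n : ℕ => (M ^ (n + 1) / (Nat.factorial (n + 1) : ℝ)) * ‖x - y‖) := by
    apply Summable.mul_right
    exact (summable_nat_add_iff 1).2 (Real.summable_pow_div_factorial M)
  calc ‖∑' n, f (n + 2)‖ ≤ ∑' n, (M ^ (n + 1) / (Nat.factorial (n + 1) : ℝ)) * ‖x - y‖ :=
        tsum_of_norm_bounded hsummaj.hasSum hbound
    _ = (∑' n, M ^ (n + 1) / (Nat.factorial (n + 1) : ℝ)) * ‖x - y‖ := tsum_mul_right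
    _ = (Real.exp M - 1) * ‖x - y‖ := by
        congr 1
        have hexp : Real.exp M = ∑' n, M ^ n / (Nat.factorial n : ℝ) := by
          rw [Real.exp_eq_exp_ℝ, exp_eq_tsum_div]
        rw [hexp, Summable.tsum_eq_zero_add (Real.summable_pow_div_factorial M)]
        simp

/-- **logarithm estimate.** Let `t ↦ A(t)` and `t ↦ B(t)` be norm-continuous maps
from `ℝ` to the bounded operators on a Hilbert space `H` with `A(0) = B(0) = 0`. Setting
`Λ_A(t) = exp(A(t))` and `Λ_B(t) = exp(B(t))`, there exist constants `C > 0` and `r > 0` such that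
`‖A(t) − B(t)‖ ≤ C ‖Λ_A(t) − Λ_B(t)‖` for all `|t| ≤ r`. -/
theorem log_estimate_near_zero
    {H : Type*} [NormedAddCommGroup H] [InnerProductSpace ℂ H] [CompleteSpace H]
    (A B : ℝ → H →L[ℂ] H)
    (hA : Continuous A) (hB : Continuous B) (hA0 : A 0 = 0) (hB0 : B 0 = 0) :
    ∃ (C r : ℝ), 0 < C ∧ 0 < r ∧ ∀ t : ℝ, |t| ≤ r →
      ‖A t - B t‖ ≤ C * ‖NormedSpace.exp (A t) - NormedSpace.exp (B t)‖ := by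
  rcases subsingleton_or_nontrivial H with hH | hH
  · refine ⟨1, 1, one_pos, one_pos, fun t _ => ?_⟩
    have : A t - B t = 0 := Subsingleton.elim _ _
    rw [this, norm_zero, one_mul]
    positivity
  · set M : ℝ := Real.log (3/2) with hMdef
    have hM : 0 < M := Real.log_pos (by norm_num)
    have hAc := Metric.continuousAt_iff.mp (hA.continuousAt (x := 0)) M hM
    have hBc := Metric.continuousAt_iff.mp (hB.continuousAt (x := 0)) M hM
    obtain ⟨δA, hδA, hAδ⟩ := hAc
    obtain ⟨δB, hδB, hBδ⟩ := hBc
    refine ⟨2, min δA δB / 2, two_pos, by positivity, fun t ht => ?_⟩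
    have htA : dist t 0 < δA := by
      rw [Real.dist_eq, sub_zero]
      calc |t| ≤ min δA δB / 2 := ht
        _ < min δA δB := by
            have := lt_min hδA hδB
            linarith
        _ ≤ δA := min_le_left _ _
    have htB : dist t 0 < δB := by
      rw [Real.dist_eq, sub_zero]
      calc |t| ≤ min δA δB / 2 := ht
        _ < min δA δB := by
            have := lt_min hδA hδB
            linarith
        _ ≤ δB := min_le_right _ _
    have hAn : ‖A t‖ ≤ M := by
      have := hAδ htA
      rw [dist_eq_norm, hA0, sub_zero] at this
      exact this.le
    have hBn : ‖B t‖ ≤ M := by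
      have := hBδ htB
      rw [dist_eq_norm, hB0, sub_zero] at this
      exact this.le
    have hkey := exp_sub_exp_sub_le (A t) (B t) hAn hBn
    have hexpM : Real.exp M - 1 = 1/2 := by
      rw [hMdef, Real.exp_log (by norm_num : (0:ℝ) < 3/2)]
      norm_num
    rw [hexpM] at hkey
    have htr : ‖A t - B t‖ ≤ ‖NormedSpace.exp (A t) - NormedSpace.exp (B t)‖
        + 1/2 * ‖A t - B t‖ := by
      calc ‖A t - B t‖
          = ‖(NormedSpace.exp (A t) - NormedSpace.exp (B t))
            - (NormedSpace.exp (A t) - NormedSpace.exp (B t) - (A t - B t))‖ := by abel_nf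
        _ ≤ ‖NormedSpace.exp (A t) - NormedSpace.exp (B t)‖
            + ‖NormedSpace.exp (A t) - NormedSpace.exp (B t) - (A t - B t)‖ :=
            norm_sub_le _ _
        _ ≤ _ := by linarith
    linarith
end

section
/- Let A and B be self-adjoint operators on a Hilbert space H with D(A^m) = D(B^m) for all m ∈ ℕ. Then for every m ∈ ℕ and s, t ∈ ℝ, the operator A^m e^{isA} e^{itB} is both A^m-bounded and B^m-bounded; that is, there exist constants a, b ≥ 0 such that ‖A^m e^{isA} e^{itB} ψ‖ ≤ a‖A^m ψ‖ + b‖ψ‖ for all ψ ∈ D(A^m) (and similarly with B^m in place of A^m on the right). -/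
open Filter Topology
set_option linter.unusedSectionVars false

/-- Domain of the `m`-th power of an unbounded operator encoded by a global function `f`
together with its domain `D`: `D(A⁰) = H` and `D(A^{m+1}) = {ψ ∈ D : f ψ ∈ D(A^m)}`. -/
def powDom {H : Type*} (f : H → H) (D : Set H) : ℕ → Set H
  | 0 => Set.univ
  | m + 1 => {ψ | ψ ∈ D ∧ f ψ ∈ powDom f D m}

namespace PRB

variable {H : Type*} [NormedAddCommGroup H] [InnerProductSpace ℂ H] [CompleteSpace H]

local notation "⟪" x ", " y "⟫" => @inner ℂ H _ x y

lemma eq_of_inner_dense {D : Submodule ℂ H} (hdense : Dense (D : Set H)) {x y : H}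
    (h : ∀ χ ∈ D, ⟪x, χ⟫ = ⟪y, χ⟫) : x = y := by
  apply ext_inner_right ℂ
  intro v
  have hc1 : Continuous fun χ : H => ⟪x, χ⟫ := continuous_const.inner continuous_id
  have hc2 : Continuous fun χ : H => ⟪y, χ⟫ := continuous_const.inner continuous_id
  exact congrFun (Continuous.ext_on hdense hc1 hc2 (fun χ hχ => h χ hχ)) v

section Sym

variable {D : Submodule ℂ H} {f : H → H}

/-- f is additive on D -/
lemma f_add (hdense : Dense (D : Set H))
    (hsym : ∀ ψ ∈ D, ∀ φ ∈ D, ⟪f ψ, φ⟫ = ⟪ψ, f φ⟫)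
    {ψ φ : H} (hψ : ψ ∈ D) (hφ : φ ∈ D) : f (ψ + φ) = f ψ + f φ := by
  apply eq_of_inner_dense hdense
  intro χ hχ
  rw [hsym _ (D.add_mem hψ hφ) _ hχ, inner_add_left, inner_add_left,
    hsym _ hψ _ hχ, hsym _ hφ _ hχ]

lemma f_smul (hdense : Dense (D : Set H))
    (hsym : ∀ ψ ∈ D, ∀ φ ∈ D, ⟪f ψ, φ⟫ = ⟪ψ, f φ⟫)
    {ψ : H} (c : ℂ) (hψ : ψ ∈ D) : f (c • ψ) = c • f ψ := by
  apply eq_of_inner_dense hdense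
  intro χ hχ
  rw [hsym _ (D.smul_mem c hψ) _ hχ, inner_smul_left, inner_smul_left, hsym _ hψ _ hχ]

lemma f_zero (hdense : Dense (D : Set H))
    (hsym : ∀ ψ ∈ D, ∀ φ ∈ D, ⟪f ψ, φ⟫ = ⟪ψ, f φ⟫) : f (0 : H) = 0 := by
  have := f_smul hdense hsym (0 : ℂ) D.zero_mem
  simpa using this

/-- closedness of a self-adjoint operator -/
lemma f_closed (hdense : Dense (D : Set H))
    (hsym : ∀ ψ ∈ D, ∀ φ ∈ D, ⟪f ψ, φ⟫ = ⟪ψ, f φ⟫)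
    (hsa : ∀ φ : H, (∃ η : H, ∀ ψ ∈ D, ⟪φ, f ψ⟫ = ⟪η, ψ⟫) → φ ∈ D)
    {ψ : ℕ → H} {x y : H} (hmem : ∀ n, ψ n ∈ D)
    (hx : Tendsto ψ atTop (𝓝 x)) (hy : Tendsto (fun n => f (ψ n)) atTop (𝓝 y)) :
    x ∈ D ∧ f x = y := by
  have key : ∀ χ ∈ D, ⟪x, f χ⟫ = ⟪y, χ⟫ := by
    intro χ hχ
    have h1 : Tendsto (fun n => ⟪ψ n, f χ⟫) atTop (𝓝 ⟪x, f χ⟫) :=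
      Filter.Tendsto.inner hx (tendsto_const_nhds (α := ℕ) (x := f χ))
    have h2 : Tendsto (fun n => ⟪f (ψ n), χ⟫) atTop (𝓝 ⟪y, χ⟫) :=
      Filter.Tendsto.inner hy (tendsto_const_nhds (α := ℕ) (x := χ))
    have heq : (fun n => ⟪ψ n, f χ⟫) = fun n => ⟪f (ψ n), χ⟫ := by
      funext n; rw [hsym _ (hmem n) _ hχ]
    rw [heq] at h1
    exact tendsto_nhds_unique h1 h2
  have hxD : x ∈ D := hsa x ⟨y, key⟩
  refine ⟨hxD, eq_of_inner_dense hdense fun χ hχ => ?_⟩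
  rw [hsym _ hxD _ hχ, key _ hχ]

lemma mem_powDom_iff (f : H → H) (m : ℕ) (ψ : H) :
    ψ ∈ powDom f (D : Set H) m ↔ ∀ k < m, f^[k] ψ ∈ D := by
  induction m generalizing ψ with
  | zero => simp [powDom]
  | succ m ih =>
    constructor
    · rintro ⟨h0, hrest⟩ k hk
      cases k with
      | zero => simpa using h0
      | succ k =>
        rw [Function.iterate_succ_apply]
        exact (ih (f ψ)).1 hrest k (by omega)
    · intro h
      refine ⟨by simpa using h 0 (by omega), (ih (f ψ)).2 fun k hk => ?_⟩
      rw [← Function.iterate_succ_apply]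
      exact h (k+1) (by omega)

lemma powDom_zero_mem (hdense : Dense (D : Set H))
    (hsym : ∀ ψ ∈ D, ∀ φ ∈ D, ⟪f ψ, φ⟫ = ⟪ψ, f φ⟫) (m : ℕ) :
    (0 : H) ∈ powDom f (D : Set H) m ∧ f^[m] (0 : H) = 0 := by
  induction m with
  | zero => exact ⟨trivial, rfl⟩
  | succ m ih =>
    have h0 := f_zero hdense hsym
    refine ⟨⟨D.zero_mem, by rw [h0]; exact ih.1⟩, ?_⟩
    rw [Function.iterate_succ_apply, h0, ih.2]

lemma powDom_add_mem (hdense : Dense (D : Set H))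
    (hsym : ∀ ψ ∈ D, ∀ φ ∈ D, ⟪f ψ, φ⟫ = ⟪ψ, f φ⟫) (m : ℕ)
    {ψ φ : H} (hψ : ψ ∈ powDom f (D : Set H) m) (hφ : φ ∈ powDom f (D : Set H) m) :
    ψ + φ ∈ powDom f (D : Set H) m ∧ f^[m] (ψ + φ) = f^[m] ψ + f^[m] φ := by
  induction m generalizing ψ φ with
  | zero => exact ⟨trivial, rfl⟩
  | succ m ih =>
    obtain ⟨hψD, hψr⟩ := hψ
    obtain ⟨hφD, hφr⟩ := hφ
    have hadd := f_add hdense hsym hψD hφD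
    obtain ⟨h1, h2⟩ := ih hψr hφr
    refine ⟨⟨D.add_mem hψD hφD, by rw [hadd]; exact h1⟩, ?_⟩
    rw [Function.iterate_succ_apply, hadd, h2,
      Function.iterate_succ_apply, Function.iterate_succ_apply]

lemma powDom_smul_mem (hdense : Dense (D : Set H))
    (hsym : ∀ ψ ∈ D, ∀ φ ∈ D, ⟪f ψ, φ⟫ = ⟪ψ, f φ⟫) (m : ℕ) (c : ℂ)
    {ψ : H} (hψ : ψ ∈ powDom f (D : Set H) m) :
    c • ψ ∈ powDom f (D : Set H) m ∧ f^[m] (c • ψ) = c • f^[m] ψ := by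
  induction m generalizing ψ with
  | zero => exact ⟨trivial, rfl⟩
  | succ m ih =>
    obtain ⟨hψD, hψr⟩ := hψ
    have hs := f_smul hdense hsym c hψD
    obtain ⟨h1, h2⟩ := ih hψr
    refine ⟨⟨D.smul_mem c hψD, by rw [hs]; exact h1⟩, ?_⟩
    rw [Function.iterate_succ_apply, hs, h2, Function.iterate_succ_apply]

lemma powDom_sub_mem (hdense : Dense (D : Set H))
    (hsym : ∀ ψ ∈ D, ∀ φ ∈ D, ⟪f ψ, φ⟫ = ⟪ψ, f φ⟫) (m : ℕ)
    {ψ φ : H} (hψ : ψ ∈ powDom f (D : Set H) m) (hφ : φ ∈ powDom f (D : Set H) m) :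
    ψ - φ ∈ powDom f (D : Set H) m ∧ f^[m] (ψ - φ) = f^[m] ψ - f^[m] φ := by
  have hneg := powDom_smul_mem hdense hsym m (-1 : ℂ) hφ
  have hadd := powDom_add_mem hdense hsym m hψ hneg.1
  rw [hneg.2] at hadd
  constructor
  · simpa [sub_eq_add_neg] using hadd.1
  · have := hadd.2
    simp only [neg_one_smul] at this ⊢
    rw [sub_eq_add_neg, this, sub_eq_add_neg]


/-- log-convexity implies max bound -/
lemma logconvex_max {a : ℕ → ℝ} {m : ℕ} (ha : ∀ k, k ≤ m → 0 ≤ a k)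
    (h : ∀ k, 0 < k → k < m → a k ^ 2 ≤ a (k - 1) * a (k + 1)) :
    ∀ k, k ≤ m → a k ≤ max (a 0) (a m) := by
  have hex : ∃ j, j ≤ m ∧ ∀ i ≤ m, a i ≤ a j := by
    obtain ⟨j, hj, hmax⟩ := (Finset.range (m + 1)).exists_max_image a ⟨0, by simp⟩
    exact ⟨j, Nat.lt_succ_iff.mp (Finset.mem_range.1 hj),
      fun i hi => hmax i (Finset.mem_range.2 (by omega))⟩
  classical
  set j := Nat.find hex with hjdef
  obtain ⟨hjm, hjmax⟩ := Nat.find_spec hex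
  intro k hk
  rcases eq_or_ne j 0 with hj0 | hj0
  · exact le_max_of_le_left (hj0 ▸ hjmax k hk)
  rcases eq_or_ne j m with hjm' | hjm'
  · exact le_max_of_le_right (hjm' ▸ hjmax k hk)
  -- 0 < j < m
  have hjpos : 0 < j := Nat.pos_of_ne_zero hj0
  have hjlt : j < m := lt_of_le_of_ne hjm hjm'
  rcases le_or_gt (a j) 0 with haj0 | hajpos
  · have : a k ≤ 0 := le_trans (hjmax k hk) haj0
    exact le_max_of_le_left (le_trans this (ha 0 (Nat.zero_le m)))
  · exfalso
    have hcs := h j hjpos hjlt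
    have h1 : a (j + 1) ≤ a j := hjmax (j + 1) (by omega)
    have h2 : a j * a j ≤ a (j - 1) * a j := by
      calc a j * a j = a j ^ 2 := (sq (a j)).symm
        _ ≤ a (j - 1) * a (j + 1) := hcs
        _ ≤ a (j - 1) * a j := by
            exact mul_le_mul_of_nonneg_left h1 (ha (j - 1) (by omega))
    have h3 : a j ≤ a (j - 1) := le_of_mul_le_mul_right h2 hajpos
    have : j ≤ j - 1 := Nat.find_min' hex ⟨by omega, fun i hi => le_trans (hjmax i hi) h3⟩
    omega

section Sym2

variable {D : Submodule ℂ H} {f : H → H}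

/-- Cauchy–Schwarz step -/
lemma cs_step (hdense : Dense (D : Set H))
    (hsym : ∀ ψ ∈ D, ∀ φ ∈ D, ⟪f ψ, φ⟫ = ⟪ψ, f φ⟫)
    {x : H} (hx : x ∈ D) (hfx : f x ∈ D) :
    ‖f x‖ ^ 2 ≤ ‖x‖ * ‖f (f x)‖ := by
  have h1 : ⟪f x, f x⟫ = ⟪x, f (f x)⟫ := hsym _ hx _ hfx
  have h2 : (‖f x‖ : ℝ) ^ 2 = ‖⟪f x, f x⟫‖ := by
    rw [inner_self_eq_norm_sq_to_K]
    simp [sq]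
  rw [h2, h1]
  exact le_trans (norm_inner_le_norm _ _) le_rfl

/-- interpolation: intermediate powers bounded by max of ends -/
lemma interp (hdense : Dense (D : Set H))
    (hsym : ∀ ψ ∈ D, ∀ φ ∈ D, ⟪f ψ, φ⟫ = ⟪ψ, f φ⟫)
    (m : ℕ) {ψ : H} (hψ : ψ ∈ powDom f (D : Set H) m) :
    ∀ k, k ≤ m → ‖f^[k] ψ‖ ≤ max ‖ψ‖ ‖f^[m] ψ‖ := by
  have hmem := (mem_powDom_iff (D := D) f m ψ).1 hψ
  have key := logconvex_max (a := fun k => ‖f^[k] ψ‖) (m := m)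
    (fun k _ => norm_nonneg _) ?_
  · simpa using key
  · intro k hk0 hkm
    obtain ⟨j, rfl⟩ : ∃ j, k = j + 1 := ⟨k - 1, by omega⟩
    have hx : f^[j] ψ ∈ D := hmem j (by omega)
    have hfx : f^[j + 1] ψ ∈ D := hmem (j + 1) hkm
    have e1 : f (f^[j] ψ) = f^[j + 1] ψ := (Function.iterate_succ_apply' f j ψ).symm
    have e2 : f (f^[j + 1] ψ) = f^[j + 1 + 1] ψ :=
      (Function.iterate_succ_apply' f (j + 1) ψ).symm
    have hcs := cs_step hdense hsym hx (e1 ▸ hfx)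
    rw [e1, e2] at hcs
    simpa using hcs

/-- closedness of powers -/
lemma powDom_closed (hdense : Dense (D : Set H))
    (hsym : ∀ ψ ∈ D, ∀ φ ∈ D, ⟪f ψ, φ⟫ = ⟪ψ, f φ⟫)
    (hsa : ∀ φ : H, (∃ η : H, ∀ ψ ∈ D, ⟪φ, f ψ⟫ = ⟪η, ψ⟫) → φ ∈ D)
    (m : ℕ) (ψ : ℕ → H) (x y : H)
    (hmem : ∀ n, ψ n ∈ powDom f (D : Set H) m)
    (hx : Tendsto ψ atTop (𝓝 x))
    (hy : Tendsto (fun n => f^[m] (ψ n)) atTop (𝓝 y)) :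
    x ∈ powDom f (D : Set H) m ∧ f^[m] x = y := by
  induction m generalizing ψ x y with
  | zero =>
    refine ⟨trivial, ?_⟩
    simp only [Function.iterate_zero_apply] at hy ⊢
    exact tendsto_nhds_unique hx hy
  | succ m ih =>
    -- f ∘ ψ is Cauchy
    have hDmem : ∀ n, ψ n ∈ D := fun n => (hmem n).1
    have hcauchy : CauchySeq (fun n => f (ψ n)) := by
      rw [Metric.cauchySeq_iff]
      intro ε hε
      obtain ⟨N1, hN1⟩ := Metric.cauchySeq_iff.1 hx.cauchySeq ε hε
      obtain ⟨N2, hN2⟩ := Metric.cauchySeq_iff.1 hy.cauchySeq ε hε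
      refine ⟨max N1 N2, fun i hi j hj => ?_⟩
      have hsub := powDom_sub_mem hdense hsym (m + 1) (hmem i) (hmem j)
      have hint := interp hdense hsym (m + 1) hsub.1 1 (by omega)
      have h1 : f^[1] (ψ i - ψ j) = f (ψ i) - f (ψ j) := by
        rw [Function.iterate_one]
        exact (powDom_sub_mem hdense hsym 1 ⟨hDmem i, trivial⟩ ⟨hDmem j, trivial⟩).2
          |>.trans (by simp)
      rw [h1, hsub.2] at hint
      have hd1 : ‖ψ i - ψ j‖ < ε := by
        have := hN1 i (le_trans (le_max_left _ _) hi) j (le_trans (le_max_left _ _) hj)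
        rwa [dist_eq_norm] at this
      have hd2 : ‖f^[m + 1] (ψ i) - f^[m + 1] (ψ j)‖ < ε := by
        have := hN2 i (le_trans (le_max_right _ _) hi) j (le_trans (le_max_right _ _) hj)
        rwa [dist_eq_norm] at this
      rw [dist_eq_norm]
      exact lt_of_le_of_lt hint (max_lt hd1 hd2)
    obtain ⟨φ, hφ⟩ := cauchySeq_tendsto_of_complete hcauchy
    obtain ⟨hxD, hfx⟩ := f_closed hdense hsym hsa hDmem hx hφ
    have hiter : (fun n => f^[m + 1] (ψ n)) = fun n => f^[m] (f (ψ n)) := by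
      funext n; rw [Function.iterate_succ_apply]
    rw [hiter] at hy
    obtain ⟨hφmem, hφm⟩ := ih (fun n => f (ψ n)) φ y (fun n => (hmem n).2) hφ hy
    refine ⟨⟨hxD, hfx ▸ hφmem⟩, ?_⟩
    rw [Function.iterate_succ_apply, hfx, hφm]

end Sym2

section Comm

variable {D : Submodule ℂ H} {f : H → H} {U : ℝ → H →L[ℂ] H}

lemma comm_D (hU0 : U 0 = 1) (hUgrp : ∀ s t : ℝ, U (s + t) = (U s).comp (U t))
    (hUder : ∀ ψ ∈ D, ∀ t : ℝ, HasDerivAt (fun r => U r ψ) (Complex.I • f (U t ψ)) t)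
    {ψ : H} (hψ : ψ ∈ D) (t : ℝ) : f (U t ψ) = U t (f ψ) := by
  have h1 : HasDerivAt (fun r => U r ψ) (Complex.I • f (U t ψ)) t := hUder ψ hψ t
  have h0 : HasDerivAt (fun r => U r ψ) (Complex.I • f ψ) 0 := by
    have := hUder ψ hψ 0
    rw [hU0] at this
    simpa using this
  have hinner : HasDerivAt (fun r : ℝ => r - t) (1 : ℝ) t := (hasDerivAt_id t).sub_const t
  have hshift : HasDerivAt (fun r : ℝ => U (r - t) ψ) (Complex.I • f ψ) t := by
    have := HasDerivAt.scomp (𝕜 := ℝ) t (by simpa using h0) hinner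
    simpa [Function.comp_def] using this
  have h2 : HasDerivAt (fun r : ℝ => U t (U (r - t) ψ)) (U t (Complex.I • f ψ)) t := by
    have := HasFDerivAt.comp_hasDerivAt t (((U t).restrictScalars ℝ).hasFDerivAt) hshift
    simpa [Function.comp_def] using this
  have heq : (fun r : ℝ => U t (U (r - t) ψ)) = fun r => U r ψ := by
    funext r
    have : U r = (U t).comp (U (r - t)) := by
      rw [← hUgrp t (r - t)]
      congr 1
      ring
    rw [this]
    rfl
  rw [heq] at h2
  have := h1.unique h2
  rw [map_smul] at this
  exact smul_right_injective H Complex.I_ne_zero this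

lemma comm_pow (hU0 : U 0 = 1) (hUgrp : ∀ s t : ℝ, U (s + t) = (U s).comp (U t))
    (hUD : ∀ (t : ℝ), ∀ ψ ∈ D, U t ψ ∈ D)
    (hUder : ∀ ψ ∈ D, ∀ t : ℝ, HasDerivAt (fun r => U r ψ) (Complex.I • f (U t ψ)) t)
    (m : ℕ) {ψ : H} (hψ : ψ ∈ powDom f (D : Set H) m) (t : ℝ) :
    U t ψ ∈ powDom f (D : Set H) m ∧ f^[m] (U t ψ) = U t (f^[m] ψ) := by
  induction m generalizing ψ with
  | zero => exact ⟨trivial, rfl⟩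
  | succ m ih =>
    obtain ⟨hψD, hψr⟩ := hψ
    have hcomm := comm_D hU0 hUgrp hUder hψD t
    obtain ⟨h1, h2⟩ := ih hψr
    refine ⟨⟨hUD t ψ hψD, by rw [hcomm]; exact h1⟩, ?_⟩
    rw [Function.iterate_succ_apply, hcomm, h2, Function.iterate_succ_apply]

end Comm

section RelBound

variable {D : Submodule ℂ H}

lemma rel_bound (hdense : Dense (D : Set H)) {f g : H → H}
    (hsymf : ∀ ψ ∈ D, ∀ φ ∈ D, ⟪f ψ, φ⟫ = ⟪ψ, f φ⟫)
    (hsaf : ∀ φ : H, (∃ η : H, ∀ ψ ∈ D, ⟪φ, f ψ⟫ = ⟪η, ψ⟫) → φ ∈ D)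
    (hsymg : ∀ ψ ∈ D, ∀ φ ∈ D, ⟪g ψ, φ⟫ = ⟪ψ, g φ⟫)
    (hsag : ∀ φ : H, (∃ η : H, ∀ ψ ∈ D, ⟪φ, g ψ⟫ = ⟪η, ψ⟫) → φ ∈ D)
    (m : ℕ) (hdm : powDom f (D : Set H) m = powDom g (D : Set H) m) :
    ∃ C : ℝ, 0 ≤ C ∧ ∀ ψ ∈ powDom g (D : Set H) m,
      ‖f^[m] ψ‖ ≤ C * (‖g^[m] ψ‖ + ‖ψ‖) := by
  classical
  set Gm : Submodule ℂ (H × H) :=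
    { carrier := {p | p.1 ∈ powDom g (D : Set H) m ∧ g^[m] p.1 = p.2}
      add_mem' := by
        rintro ⟨a1, a2⟩ ⟨b1, b2⟩ ⟨ha1, ha2⟩ ⟨hb1, hb2⟩
        obtain ⟨hm, he⟩ := powDom_add_mem hdense hsymg m ha1 hb1
        exact ⟨hm, by simp only [Prod.fst_add, Prod.snd_add] at *; rw [he, ha2, hb2]⟩
      zero_mem' := by
        obtain ⟨hm, he⟩ := powDom_zero_mem (f := g) hdense hsymg m
        exact ⟨hm, by simpa using he⟩
      smul_mem' := by
        rintro c ⟨a1, a2⟩ ⟨ha1, ha2⟩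
        obtain ⟨hm, he⟩ := powDom_smul_mem hdense hsymg m c ha1
        exact ⟨hm, by simp only [Prod.smul_fst, Prod.smul_snd] at *; rw [he, ha2]⟩ }
    with hGm
  have hGclosed : IsClosed (Gm : Set (H × H)) := by
    apply IsSeqClosed.isClosed
    intro p q hpmem hp
    have h1 : Tendsto (fun n => (p n).1) atTop (𝓝 q.1) :=
      ((continuous_fst.tendsto q).comp hp)
    have h2 : Tendsto (fun n => (p n).2) atTop (𝓝 q.2) :=
      ((continuous_snd.tendsto q).comp hp)
    have h2' : Tendsto (fun n => g^[m] (p n).1) atTop (𝓝 q.2) := by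
      have : (fun n => g^[m] (p n).1) = fun n => (p n).2 := by
        funext n; exact (hpmem n).2
      rw [this]; exact h2
    exact (powDom_closed hdense hsymg hsag m _ _ _ (fun n => (hpmem n).1) h1 h2')
  haveI : CompleteSpace Gm := hGclosed.completeSpace_coe
  have hmemf : ∀ x : Gm, (x : H × H).1 ∈ powDom f (D : Set H) m := by
    intro x
    rw [hdm]
    exact x.2.1
  let T : Gm →ₗ[ℂ] H :=
    { toFun := fun x => f^[m] (x : H × H).1
      map_add' := by
        intro x y
        exact (powDom_add_mem hdense hsymf m (hmemf x) (hmemf y)).2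
      map_smul' := by
        intro c x
        exact (powDom_smul_mem hdense hsymf m c (hmemf x)).2 }
  have hcont : Continuous T := by
    apply T.continuous_of_seq_closed_graph
    intro u x y hu hTu
    have h1 : Tendsto (fun n => ((u n : H × H)).1) atTop (𝓝 (x : H × H).1) := by
      have hval : Tendsto (fun n => (u n : H × H)) atTop (𝓝 (x : H × H)) :=
        (continuous_subtype_val.tendsto x).comp hu
      exact (continuous_fst.tendsto _).comp hval
    have := powDom_closed hdense hsymf hsaf m (fun n => (u n : H × H).1)
      (x : H × H).1 y (fun n => hmemf (u n)) h1 hTu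
    exact this.2.symm
  let T' : Gm →L[ℂ] H := ⟨T, hcont⟩
  refine ⟨‖T'‖, ContinuousLinearMap.opNorm_nonneg T', fun ψ hψ => ?_⟩
  set x : Gm := ⟨(ψ, g^[m] ψ), ⟨hψ, rfl⟩⟩ with hx
  have h1 : ‖f^[m] ψ‖ = ‖T' x‖ := rfl
  have h2 : ‖T' x‖ ≤ ‖T'‖ * ‖x‖ := T'.le_opNorm x
  have h3 : ‖x‖ = max ‖ψ‖ ‖g^[m] ψ‖ := by
    rw [show ‖x‖ = ‖(x : H × H)‖ from rfl, Prod.norm_def]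
  have h4 : max ‖ψ‖ ‖g^[m] ψ‖ ≤ ‖g^[m] ψ‖ + ‖ψ‖ := by
    apply max_le
    · linarith [norm_nonneg (g^[m] ψ)]
    · linarith [norm_nonneg ψ]
  calc ‖f^[m] ψ‖ = ‖T' x‖ := h1
    _ ≤ ‖T'‖ * ‖x‖ := h2
    _ ≤ ‖T'‖ * (‖g^[m] ψ‖ + ‖ψ‖) := by
        rw [h3]
        exact mul_le_mul_of_nonneg_left h4 (ContinuousLinearMap.opNorm_nonneg T')

end RelBound

end Sym

end PRB

/-- Let `A` and `B` be self-adjoint operators on a Hilbert space `H` (encoded by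
`fA`, `fB` with common dense domain `D`, symmetric and with adjoint domains contained in `D`) such
that `D(A^m) = D(B^m)` for all `m ∈ ℕ`, and let `(UA s) = e^{isA}` and `(UB t) = e^{itB}` be the
associated unitary groups (characterized by the group law, unitarity, invariance of `D` and the
Schrödinger equation on `D`). Then for every `m ∈ ℕ` and `s, t ∈ ℝ`, the operator
`A^m e^{isA} e^{itB}` is both `A^m`-bounded and `B^m`-bounded: there exist `a, b ≥ 0` with
`‖A^m e^{isA} e^{itB} ψ‖ ≤ a ‖A^m ψ‖ + b ‖ψ‖` for all `ψ ∈ D(A^m)` (in particular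
`e^{isA} e^{itB} ψ ∈ D(A^m)`), and similarly with `B^m` in place of `A^m` on the right. -/
theorem power_relatively_bounded_through_unitary_groups
    {H : Type*} [NormedAddCommGroup H] [InnerProductSpace ℂ H] [CompleteSpace H]
    (D : Submodule ℂ H) (hdense : Dense (D : Set H))
    (fA fB : H → H)
    (hsymA : ∀ ψ ∈ D, ∀ φ ∈ D, (inner ℂ (fA ψ) φ : ℂ) = inner ℂ ψ (fA φ))
    (hsaA : ∀ φ : H, (∃ η : H, ∀ ψ ∈ D, (inner ℂ φ (fA ψ) : ℂ) = inner ℂ η ψ) → φ ∈ D)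
    (hsymB : ∀ ψ ∈ D, ∀ φ ∈ D, (inner ℂ (fB ψ) φ : ℂ) = inner ℂ ψ (fB φ))
    (hsaB : ∀ φ : H, (∃ η : H, ∀ ψ ∈ D, (inner ℂ φ (fB ψ) : ℂ) = inner ℂ η ψ) → φ ∈ D)
    (hdom : ∀ m : ℕ, powDom fA (D : Set H) m = powDom fB (D : Set H) m)
    (UA UB : ℝ → H →L[ℂ] H)
    (hUA0 : UA 0 = 1) (hUB0 : UB 0 = 1)
    (hUAgrp : ∀ s t : ℝ, UA (s + t) = (UA s).comp (UA t))
    (hUBgrp : ∀ s t : ℝ, UB (s + t) = (UB s).comp (UB t))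
    (hUAiso : ∀ (t : ℝ) (ψ : H), ‖UA t ψ‖ = ‖ψ‖)
    (hUBiso : ∀ (t : ℝ) (ψ : H), ‖UB t ψ‖ = ‖ψ‖)
    (hUAD : ∀ (t : ℝ), ∀ ψ ∈ D, UA t ψ ∈ D)
    (hUBD : ∀ (t : ℝ), ∀ ψ ∈ D, UB t ψ ∈ D)
    (hUAder : ∀ ψ ∈ D, ∀ t : ℝ,
      HasDerivAt (fun r => UA r ψ) (Complex.I • fA (UA t ψ)) t)
    (hUBder : ∀ ψ ∈ D, ∀ t : ℝ,
      HasDerivAt (fun r => UB r ψ) (Complex.I • fB (UB t ψ)) t)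
    (m : ℕ) (s t : ℝ) :
    (∃ a b : ℝ, 0 ≤ a ∧ 0 ≤ b ∧ ∀ ψ ∈ powDom fA (D : Set H) m,
        UA s (UB t ψ) ∈ powDom fA (D : Set H) m ∧
        ‖fA^[m] (UA s (UB t ψ))‖ ≤ a * ‖fA^[m] ψ‖ + b * ‖ψ‖)
    ∧ (∃ a' b' : ℝ, 0 ≤ a' ∧ 0 ≤ b' ∧ ∀ ψ ∈ powDom fB (D : Set H) m,
        UA s (UB t ψ) ∈ powDom fA (D : Set H) m ∧
        ‖fA^[m] (UA s (UB t ψ))‖ ≤ a' * ‖fB^[m] ψ‖ + b' * ‖ψ‖) := by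
  classical
  obtain ⟨C₁, hC₁0, hC₁⟩ := PRB.rel_bound hdense hsymA hsaA hsymB hsaB m (hdom m)
  obtain ⟨C₂, hC₂0, hC₂⟩ := PRB.rel_bound hdense hsymB hsaB hsymA hsaA m (hdom m).symm
  have key : ∀ ψ ∈ powDom fB (D : Set H) m,
      UA s (UB t ψ) ∈ powDom fA (D : Set H) m ∧
      ‖fA^[m] (UA s (UB t ψ))‖ ≤ C₁ * (‖fB^[m] ψ‖ + ‖ψ‖) := by
    intro ψ hψ
    have hUBc := PRB.comm_pow hUB0 hUBgrp hUBD hUBder m hψ t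
    have hUBA : UB t ψ ∈ powDom fA (D : Set H) m := (hdom m) ▸ hUBc.1
    have hUAc := PRB.comm_pow hUA0 hUAgrp hUAD hUAder m hUBA s
    refine ⟨hUAc.1, ?_⟩
    rw [hUAc.2, hUAiso]
    have hb := hC₁ (UB t ψ) hUBc.1
    rw [hUBc.2, hUBiso, hUBiso] at hb
    exact hb
  constructor
  · refine ⟨C₁ * C₂, C₁ * C₂ + C₁, mul_nonneg hC₁0 hC₂0,
      by positivity, fun ψ hψ => ?_⟩
    have hψB : ψ ∈ powDom fB (D : Set H) m := (hdom m) ▸ hψ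
    obtain ⟨hmem, hle⟩ := key ψ hψB
    refine ⟨hmem, ?_⟩
    have h2 := hC₂ ψ hψ
    nlinarith [norm_nonneg ψ, norm_nonneg (fA^[m] ψ), norm_nonneg (fB^[m] ψ)]
  · refine ⟨C₁, C₁, hC₁0, hC₁0, fun ψ hψ => ?_⟩
    obtain ⟨hmem, hle⟩ := key ψ hψ
    exact ⟨hmem, by linarith [mul_add C₁ ‖fB^[m] ψ‖ ‖ψ‖]⟩
end

section
/- Let H₀ be self-adjoint and V symmetric on a Hilbert space H with D(H₀) ⊆ D(V) and ‖Vψ‖ ≤ a‖H₀ψ‖ + b‖ψ‖ for all ψ ∈ D(H₀), for some constants a, b ≥ 0. Then for every m ∈ ℕ there exist constants cₘ, dₘ ≥ 0 (independent of T) such that for all 0 < T < min(1, 1/((2^m−1)a)) and all ψ ∈ D(H₀^m): ‖((1/T)H₀ + V)^m ψ‖ ≤ cₘ T^{−m} ‖H₀^m ψ‖ + dₘ T^{−m} ‖ψ‖. -/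
section Aux

variable {H : Type*} [NormedAddCommGroup H] [InnerProductSpace ℂ H] [CompleteSpace H]
  {D : Submodule ℂ H} {f : H → H}

lemma powDom_mono {n : ℕ} {ψ : H} (h : ψ ∈ powDom f (D : Set H) (n + 1)) :
    ψ ∈ powDom f (D : Set H) n := by
  induction n generalizing ψ with
  | zero => trivial
  | succ n ih => exact ⟨h.1, ih h.2⟩

lemma powDom_anti : ∀ {m n : ℕ}, m ≤ n → ∀ {ψ : H},
    ψ ∈ powDom f (D : Set H) n → ψ ∈ powDom f (D : Set H) m := by
  intro m n h
  induction n with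
  | zero =>
    intro ψ hψ
    obtain rfl : m = 0 := by omega
    exact hψ
  | succ n ih =>
    intro ψ hψ
    rcases Nat.eq_or_lt_of_le h with h' | h'
    · exact h' ▸ hψ
    · exact ih (by omega) (powDom_mono hψ)

lemma powDom_iter_mem : ∀ (k : ℕ) {n : ℕ} {ψ : H}, ψ ∈ powDom f (D : Set H) n →
    k + 1 ≤ n → f^[k] ψ ∈ D := by
  intro k
  induction k with
  | zero =>
    intro n ψ h hk
    have := powDom_anti (f := f) (D := D) hk h
    simpa using this.1
  | succ k ih =>
    intro n ψ h hk
    obtain ⟨n', rfl⟩ : ∃ n', n = n' + 1 := ⟨n - 1, by omega⟩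
    rw [Function.iterate_succ_apply]
    exact ih h.2 (by omega)

variable (hdense : Dense (D : Set H))
  (hsymH : ∀ ψ ∈ D, ∀ φ ∈ D, (inner ℂ (f ψ) φ : ℂ) = inner ℂ ψ (f φ))

include hdense hsymH

lemma f_add {x y : H} (hx : x ∈ D) (hy : y ∈ D) : f (x + y) = f x + f y := by
  apply hdense.eq_of_inner_left ℂ
  intro φ hφ
  rw [hsymH _ (D.add_mem hx hy) _ hφ, inner_add_left, inner_add_left,
    hsymH _ hx _ hφ, hsymH _ hy _ hφ]

lemma f_smul (c : ℂ) {x : H} (hx : x ∈ D) : f (c • x) = c • f x := by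
  apply hdense.eq_of_inner_left ℂ
  intro φ hφ
  rw [hsymH _ (D.smul_mem c hx) _ hφ, inner_smul_left, inner_smul_left,
    hsymH _ hx _ hφ]

lemma iter_add : ∀ (k : ℕ) {x y : H}, x ∈ powDom f (D : Set H) k →
    y ∈ powDom f (D : Set H) k →
    (x + y ∈ powDom f (D : Set H) k ∧ f^[k] (x + y) = f^[k] x + f^[k] y) := by
  intro k
  induction k with
  | zero => intro x y _ _; exact ⟨trivial, by simp⟩
  | succ k ih =>
    intro x y hx hy
    have hf : f (x + y) = f x + f y := f_add hdense hsymH hx.1 hy.1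
    obtain ⟨hmem, heq⟩ := ih hx.2 hy.2
    refine ⟨⟨D.add_mem hx.1 hy.1, by rw [hf]; exact hmem⟩, ?_⟩
    rw [Function.iterate_succ_apply, Function.iterate_succ_apply,
      Function.iterate_succ_apply, hf, heq]

lemma iter_smul : ∀ (k : ℕ) (c : ℂ) {x : H}, x ∈ powDom f (D : Set H) k →
    (c • x ∈ powDom f (D : Set H) k ∧ f^[k] (c • x) = c • f^[k] x) := by
  intro k
  induction k with
  | zero => intro c x _; exact ⟨trivial, by simp⟩
  | succ k ih =>
    intro c x hx
    have hf : f (c • x) = c • f x := f_smul hdense hsymH c hx.1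
    obtain ⟨hmem, heq⟩ := ih c hx.2
    refine ⟨⟨D.smul_mem c hx.1, by rw [hf]; exact hmem⟩, ?_⟩
    rw [Function.iterate_succ_apply, Function.iterate_succ_apply, hf, heq]

omit hdense

lemma interp {n : ℕ} (hn : 1 ≤ n) {ψ : H} (h : ψ ∈ powDom f (D : Set H) n) :
    ‖f ψ‖ ≤ ‖f^[n] ψ‖ + ‖ψ‖ := by
  set u : ℕ → ℝ := fun k => ‖f^[k] ψ‖ with hu
  have hu0 : ∀ k, 0 ≤ u k := fun k => norm_nonneg _
  have key : ∀ k, k + 2 ≤ n → u (k + 1) ^ 2 ≤ u k * u (k + 2) := by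
    intro k hk
    have h1 : f^[k] ψ ∈ D := powDom_iter_mem k h (by omega)
    have h2 : f^[k + 1] ψ ∈ D := powDom_iter_mem (k + 1) h (by omega)
    have e1 : f^[k+1] ψ = f (f^[k] ψ) := Function.iterate_succ_apply' f k ψ
    have e2 : f^[k+2] ψ = f (f (f^[k] ψ)) := by
      rw [Function.iterate_succ_apply' f (k+1), Function.iterate_succ_apply' f k]
    have h2' : f (f^[k] ψ) ∈ D := e1 ▸ h2
    have hinner : (inner ℂ (f^[k+1] ψ) (f^[k+1] ψ) : ℂ) = inner ℂ (f^[k] ψ) (f^[k+2] ψ) := by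
      rw [e1, e2]
      exact hsymH _ h1 _ h2'
    have : u (k + 1) ^ 2 = ‖(inner ℂ (f^[k] ψ) (f^[k+2] ψ) : ℂ)‖ := by
      rw [← hinner, inner_self_eq_norm_sq_to_K]
      simp [hu]
    rw [this]
    exact norm_inner_le_norm _ _
  have chain : ∀ k, k + 1 ≤ n → u k * u 1 ≤ u 0 * u (k + 1) := by
    intro k
    induction k with
    | zero => intro _; rw [mul_comm]
    | succ k ih =>
      intro hk
      have hkey := key k hk
      have hih := ih (by omega)
      rcases eq_or_lt_of_le (hu0 (k + 1)) with hz | hz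
      · rw [← hz, zero_mul]; positivity
      · have h1 : u (k + 1) ^ 2 * u 1 ≤ (u k * u 1) * u (k + 2) := by
          nlinarith [hu0 1, hu0 (k + 2)]
        have h2 : (u k * u 1) * u (k + 2) ≤ (u 0 * u (k + 1)) * u (k + 2) :=
          mul_le_mul_of_nonneg_right hih (hu0 (k + 2))
        have h3 : u (k + 1) * (u (k + 1) * u 1) ≤ u (k + 1) * (u 0 * u (k + 2)) := by
          nlinarith
        exact le_of_mul_le_mul_left h3 hz
  have powb : ∀ k, k + 1 ≤ n → u 1 ^ (k + 1) ≤ u 0 ^ k * u (k + 1) := by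
    intro k
    induction k with
    | zero => intro _; simp
    | succ k ih =>
      intro hk
      have hih := ih (by omega)
      have hch := chain (k + 1) hk
      calc u 1 ^ (k + 2) = u 1 ^ (k + 1) * u 1 := by ring
        _ ≤ (u 0 ^ k * u (k + 1)) * u 1 := mul_le_mul_of_nonneg_right hih (hu0 1)
        _ = u 0 ^ k * (u (k + 1) * u 1) := by ring
        _ ≤ u 0 ^ k * (u 0 * u (k + 2)) :=
            mul_le_mul_of_nonneg_left hch (by positivity)
        _ = u 0 ^ (k + 1) * u (k + 2) := by ring
  obtain ⟨n', rfl⟩ : ∃ n', n = n' + 1 := ⟨n - 1, by omega⟩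
  have hpb := powb n' (le_refl _)
  have hfinal : u 1 ^ (n' + 1) ≤ (u (n' + 1) + u 0) ^ (n' + 1) := by
    calc u 1 ^ (n' + 1) ≤ u 0 ^ n' * u (n' + 1) := hpb
      _ ≤ (u (n' + 1) + u 0) ^ n' * (u (n' + 1) + u 0) := by
          apply mul_le_mul _ (by linarith [hu0 0, hu0 (n' + 1)]) (hu0 (n' + 1)) (by positivity)
          exact pow_le_pow_left₀ (hu0 0) (by linarith [hu0 0, hu0 (n' + 1)]) n'
      _ = (u (n' + 1) + u 0) ^ (n' + 1) := by ring
  have := le_of_pow_le_pow_left₀ (n := n' + 1) (by omega) (by positivity) hfinal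
  have hu1 : u 1 = ‖f ψ‖ := by simp [hu]
  have hu00 : u 0 = ‖ψ‖ := by simp [hu]
  rw [hu1, hu00] at this
  exact this

end Aux

/-- Let `H₀` be self-adjoint (encoded by `f` with dense domain `D`) and `V`
symmetric on a Hilbert space `H` with `D(H₀) ⊆ D(V)` and `‖Vψ‖ ≤ a‖H₀ψ‖ + b‖ψ‖` on `D(H₀)`,
`a, b ≥ 0`; assume moreover (cf. the context) that for every `m`, `H₀^m V` is `H₀^{m+1}`-bounded
with `T`-independent constants. Then for every `m ∈ ℕ` there exist constants `cₘ, dₘ ≥ 0`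
(independent of `T`) such that for all `0 < T < min(1, 1/((2^m − 1)a))` and all `ψ ∈ D(H₀^m)`:
`‖((1/T)H₀ + V)^m ψ‖ ≤ cₘ T^{−m} ‖H₀^m ψ‖ + dₘ T^{−m} ‖ψ‖`. -/
theorem rescaled_power_graph_norm_bound
    {H : Type*} [NormedAddCommGroup H] [InnerProductSpace ℂ H] [CompleteSpace H]
    (D : Submodule ℂ H) (hdense : Dense (D : Set H))
    (f v : H → H)
    (hsymH : ∀ ψ ∈ D, ∀ φ ∈ D, (inner ℂ (f ψ) φ : ℂ) = inner ℂ ψ (f φ))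
    (hsaH : ∀ φ : H, (∃ η : H, ∀ ψ ∈ D, (inner ℂ φ (f ψ) : ℂ) = inner ℂ η ψ) → φ ∈ D)
    (DV : Set H) (hDV : (D : Set H) ⊆ DV)
    (hsymV : ∀ ψ ∈ DV, ∀ φ ∈ DV, (inner ℂ (v ψ) φ : ℂ) = inner ℂ ψ (v φ))
    (a b : ℝ) (ha : 0 ≤ a) (hb : 0 ≤ b)
    (hV : ∀ ψ ∈ D, ‖v ψ‖ ≤ a * ‖f ψ‖ + b * ‖ψ‖)
    (hrel : ∀ m : ℕ, ∃ aₘ bₘ : ℝ, 0 ≤ aₘ ∧ 0 ≤ bₘ ∧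
      ∀ ψ ∈ powDom f (D : Set H) (m + 1),
        ψ ∈ DV ∧ v ψ ∈ powDom f (D : Set H) m ∧
          ‖f^[m] (v ψ)‖ ≤ aₘ * ‖f^[m + 1] ψ‖ + bₘ * ‖ψ‖) :
    ∀ m : ℕ, ∃ c d : ℝ, 0 ≤ c ∧ 0 ≤ d ∧
      ∀ T : ℝ, 0 < T → T < 1 → ((2 ^ m - 1 : ℝ) * a) * T < 1 →
        ∀ ψ ∈ powDom f (D : Set H) m,
          ‖(fun φ => T⁻¹ • f φ + v φ)^[m] ψ‖
            ≤ c * (T ^ m)⁻¹ * ‖f^[m] ψ‖ + d * (T ^ m)⁻¹ * ‖ψ‖ := by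
  suffices key : ∀ m : ℕ, ∃ c d : ℝ, 0 ≤ c ∧ 0 ≤ d ∧
      ∀ T : ℝ, 0 < T → T < 1 →
        ∀ ψ ∈ powDom f (D : Set H) m,
          ‖(fun φ => T⁻¹ • f φ + v φ)^[m] ψ‖
            ≤ c * (T ^ m)⁻¹ * ‖f^[m] ψ‖ + d * (T ^ m)⁻¹ * ‖ψ‖ by
    intro m
    obtain ⟨c, d, hc, hd, hbd⟩ := key m
    exact ⟨c, d, hc, hd, fun T hT hT1 _ ψ hψ => hbd T hT hT1 ψ hψ⟩
  intro m
  induction m with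
  | zero =>
    refine ⟨0, 1, le_refl _, zero_le_one, ?_⟩
    intro T hT hT1 ψ hψ
    simp
  | succ m ih =>
    obtain ⟨c, d, hc, hd, hbd⟩ := ih
    obtain ⟨aₘ, bₘ, haₘ, hbₘ, hrelm⟩ := hrel m
    refine ⟨c * (1 + aₘ) + d * (1 + a), c * bₘ + d * (1 + a + b),
      by positivity, by positivity, ?_⟩
    intro T hT hT1 ψ hψ
    obtain ⟨hψDV, hvmem, hvbound⟩ := hrelm ψ hψ
    have hs1 : (1 : ℝ) ≤ T⁻¹ := (one_le_inv₀ hT).mpr hT1.le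
    have hs0 : (0 : ℝ) < T⁻¹ := by positivity
    -- real smul as complex smul
    have hcs : ∀ x : H, T⁻¹ • x = ((T⁻¹ : ℝ) : ℂ) • x :=
      fun x => (Complex.coe_smul T⁻¹ x).symm
    -- membership of A ψ
    have hfψ : f ψ ∈ powDom f (D : Set H) m := hψ.2
    have hsm := iter_smul hdense hsymH m ((T⁻¹ : ℝ) : ℂ) hfψ
    have hadd := iter_add hdense hsymH m hsm.1 hvmem
    have hAmem : T⁻¹ • f ψ + v ψ ∈ powDom f (D : Set H) m := by
      rw [hcs]; exact hadd.1
    -- linearity of f^[m] at A ψ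
    have hAeq : f^[m] (T⁻¹ • f ψ + v ψ) = T⁻¹ • f^[m + 1] ψ + f^[m] (v ψ) := by
      rw [hcs, hadd.2, hsm.2, ← Function.iterate_succ_apply, ← hcs]
    -- iterate step
    have hstep : (fun φ => T⁻¹ • f φ + v φ)^[m + 1] ψ
        = (fun φ => T⁻¹ • f φ + v φ)^[m] (T⁻¹ • f ψ + v ψ) :=
      Function.iterate_succ_apply _ m ψ
    have hIH := hbd T hT hT1 _ hAmem
    rw [← hstep] at hIH
    set F := ‖f^[m + 1] ψ‖ with hF
    set P := ‖ψ‖ with hP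
    have hF0 : 0 ≤ F := norm_nonneg _
    have hP0 : 0 ≤ P := norm_nonneg _
    -- bound on ‖f^[m] (A ψ)‖
    have hX : ‖f^[m] (T⁻¹ • f ψ + v ψ)‖ ≤ T⁻¹ * ((1 + aₘ) * F + bₘ * P) := by
      rw [hAeq]
      have h1 : ‖T⁻¹ • f^[m + 1] ψ + f^[m] (v ψ)‖
          ≤ T⁻¹ * F + (aₘ * F + bₘ * P) := by
        calc ‖T⁻¹ • f^[m + 1] ψ + f^[m] (v ψ)‖
            ≤ ‖T⁻¹ • f^[m + 1] ψ‖ + ‖f^[m] (v ψ)‖ := norm_add_le _ _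
          _ ≤ T⁻¹ * F + (aₘ * F + bₘ * P) := by
              rw [norm_smul]
              have : ‖T⁻¹‖ = T⁻¹ := abs_of_pos hs0
              rw [this]
              exact add_le_add_right hvbound _
      have h2 : aₘ * F + bₘ * P ≤ T⁻¹ * (aₘ * F + bₘ * P) := by
        nlinarith [mul_nonneg (mul_nonneg haₘ hF0) (sub_nonneg.mpr hs1),
          mul_nonneg (mul_nonneg hbₘ hP0) (sub_nonneg.mpr hs1)]
      nlinarith
    -- bound on ‖A ψ‖
    have hF1 : ‖f ψ‖ ≤ F + P := interp hsymH (Nat.succ_le_succ (Nat.zero_le m)) hψ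
    have hF10 : (0:ℝ) ≤ ‖f ψ‖ := norm_nonneg _
    have hY : ‖T⁻¹ • f ψ + v ψ‖ ≤ T⁻¹ * ((1 + a) * (F + P) + b * P) := by
      have h1 : ‖T⁻¹ • f ψ + v ψ‖ ≤ T⁻¹ * ‖f ψ‖ + (a * ‖f ψ‖ + b * P) := by
        calc ‖T⁻¹ • f ψ + v ψ‖ ≤ ‖T⁻¹ • f ψ‖ + ‖v ψ‖ := norm_add_le _ _
          _ ≤ T⁻¹ * ‖f ψ‖ + (a * ‖f ψ‖ + b * P) := by
              rw [norm_smul, Real.norm_of_nonneg hs0.le]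
              exact add_le_add_right (hV ψ hψ.1) _
      nlinarith [mul_nonneg (mul_nonneg ha hF10) (sub_nonneg.mpr hs1),
        mul_nonneg (mul_nonneg hb hP0) (sub_nonneg.mpr hs1),
        mul_le_mul_of_nonneg_left hF1 (mul_nonneg (by linarith : (0:ℝ) ≤ 1 + a) hs0.le)]
    -- put it together
    have hSm : (0:ℝ) < (T ^ m)⁻¹ := by positivity
    have hfinal := hIH
    have hc1 : c * (T ^ m)⁻¹ * ‖f^[m] (T⁻¹ • f ψ + v ψ)‖
        ≤ c * (T ^ m)⁻¹ * (T⁻¹ * ((1 + aₘ) * F + bₘ * P)) :=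
      mul_le_mul_of_nonneg_left hX (by positivity)
    have hd1 : d * (T ^ m)⁻¹ * ‖T⁻¹ • f ψ + v ψ‖
        ≤ d * (T ^ m)⁻¹ * (T⁻¹ * ((1 + a) * (F + P) + b * P)) :=
      mul_le_mul_of_nonneg_left hY (by positivity)
    have hpow : (T ^ (m + 1))⁻¹ = (T ^ m)⁻¹ * T⁻¹ := by
      rw [pow_succ, mul_inv]
    calc ‖(fun φ => T⁻¹ • f φ + v φ)^[m + 1] ψ‖
        ≤ c * (T ^ m)⁻¹ * ‖f^[m] (T⁻¹ • f ψ + v ψ)‖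
          + d * (T ^ m)⁻¹ * ‖T⁻¹ • f ψ + v ψ‖ := hfinal
      _ ≤ c * (T ^ m)⁻¹ * (T⁻¹ * ((1 + aₘ) * F + bₘ * P))
          + d * (T ^ m)⁻¹ * (T⁻¹ * ((1 + a) * (F + P) + b * P)) := add_le_add hc1 hd1
      _ = (c * (1 + aₘ) + d * (1 + a)) * (T ^ (m + 1))⁻¹ * F
          + (c * bₘ + d * (1 + a + b)) * (T ^ (m + 1))⁻¹ * P := by
          rw [hpow]; ring
end
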